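/- arXiv:1607.07555 — 2 statements merged into one kernel-verified Lean document; each statement's English description precedes it below -/
import Mathlib

section
/- Convergence in capacity implies convergence in distribution (under monotone continuity): assume $V$ is continuous from above; if $X_n \to X$ in capacity and both $X$ and all $X_n$ lie in $L^1_b$ (i.e., $\hat{E}[|Z| 1_{\{|Z| > c\}}] \to 0$ as $c \to \infty$), then for every bounded continuous $f : \mathbb{R} \to \mathbb{R}$, $\hat{E}[f(X_n)] \to \hat{E}[f(X)]$. -/
open MeasureTheory Filter Set Topology ENNReal

/-- The upper capacity associated to a family of probability measures. -/
noncomputable def upperCap {Ω : Type*} [MeasurableSpace Ω]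
    (Ps : Set (Measure Ω)) (A : Set Ω) : ℝ≥0∞ :=
  ⨆ P ∈ Ps, P A

/-- The sublinear expectation (of a nonnegative quantity). -/
noncomputable def subExpNN {Ω : Type*} [MeasurableSpace Ω]
    (Ps : Set (Measure Ω)) (Z : Ω → ℝ) : ℝ≥0∞ :=
  ⨆ P ∈ Ps, ∫⁻ ω, ENNReal.ofReal (Z ω) ∂P

/-- The sublinear expectation (real-valued, for bounded quantities). -/
noncomputable def subExp {Ω : Type*} [MeasurableSpace Ω]
    (Ps : Set (Measure Ω)) (Z : Ω → ℝ) : ℝ :=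
  ⨆ P ∈ Ps, ∫ ω, Z ω ∂P

/-- Membership in `L^1_b`: the truncated tails of `Z` are uniformly small. -/
def MemL1b {Ω : Type*} [MeasurableSpace Ω] (Ps : Set (Measure Ω)) (Z : Ω → ℝ) : Prop :=
  Tendsto (fun c : ℝ =>
      subExpNN Ps (fun ω => Set.indicator {ω' | c < |Z ω'|} (fun ω' => |Z ω'|) ω))
    atTop (𝓝 0)

lemma abs_ciSup_sub_ciSup_le {ι : Type*} [Nonempty ι] {a b : ι → ℝ} {c : ℝ}
    (ha : BddAbove (Set.range a)) (hb : BddAbove (Set.range b))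
    (h : ∀ i, |a i - b i| ≤ c) : |(⨆ i, a i) - ⨆ i, b i| ≤ c := by
  have h1 : ∀ i, a i - b i ≤ c := fun i => (abs_sub_le_iff.1 (h i)).1
  have h2 : ∀ i, b i - a i ≤ c := fun i => (abs_sub_le_iff.1 (h i)).2
  rw [abs_sub_le_iff]
  constructor
  · rw [sub_le_iff_le_add]
    exact ciSup_le fun i => by have := le_ciSup hb i; linarith [h1 i]
  · rw [sub_le_iff_le_add]
    exact ciSup_le fun i => by have := le_ciSup ha i; linarith [h2 i]

theorem capacity_convergence_implies_distribution {Ω : Type*} [MeasurableSpace Ω]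
    (Ps : Set (Measure Ω)) (hne : Ps.Nonempty)
    (hprob : ∀ P ∈ Ps, IsProbabilityMeasure P)
    (hV : ∀ B : ℕ → Set Ω, (∀ n, MeasurableSet (B n)) → Antitone B →
      Tendsto (fun n => upperCap Ps (B n)) atTop (𝓝 (upperCap Ps (⋂ n, B n))))
    (X : Ω → ℝ) (Xn : ℕ → Ω → ℝ) (hX : Measurable X) (hXn : ∀ n, Measurable (Xn n))
    (hXL1b : MemL1b Ps X) (hXnL1b : ∀ n, MemL1b Ps (Xn n))
    (hconv : ∀ ε > (0 : ℝ),
      Tendsto (fun n => upperCap Ps {ω | ε ≤ |Xn n ω - X ω|}) atTop (𝓝 0)) :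
    ∀ f : ℝ → ℝ, Continuous f → (∃ M, ∀ x, |f x| ≤ M) →
      Tendsto (fun n => subExp Ps (fun ω => f (Xn n ω))) atTop
        (𝓝 (subExp Ps (fun ω => f (X ω)))) := by
  rintro f hf ⟨M, hM⟩
  have hM0 : (0 : ℝ) ≤ M := (abs_nonneg (f 0)).trans (hM 0)
  haveI : Nonempty (Measure Ω) := ⟨0⟩
  rw [Metric.tendsto_nhds]
  intro ε hε
  set κ : ℝ≥0∞ := ENNReal.ofReal (ε / (8 * (M + 1))) with hκdef
  have hκpos : 0 < κ := ENNReal.ofReal_pos.2 (by positivity)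
  -- choose the truncation level N
  obtain ⟨N, hNtail, hN1⟩ :=
    ((hXL1b.eventually_lt_const hκpos).and (eventually_ge_atTop (1 : ℝ))).exists
  -- tail capacity bound
  have hA2meas : MeasurableSet {ω | N < |X ω|} :=
    measurableSet_lt measurable_const hX.abs
  have htail : ∀ P ∈ Ps, P {ω | N < |X ω|} ≤ κ := by
    intro P hP
    have key : ENNReal.ofReal N * P {ω | N < |X ω|} ≤
        ∫⁻ ω, ENNReal.ofReal
          (Set.indicator {ω' | N < |X ω'|} (fun ω' => |X ω'|) ω) ∂P := by
      rw [← lintegral_indicator_const hA2meas (ENNReal.ofReal N)]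
      refine lintegral_mono fun ω => ?_
      by_cases hω : ω ∈ {ω' | N < |X ω'|}
      · rw [Set.indicator_of_mem hω, Set.indicator_of_mem hω]
        exact ENNReal.ofReal_le_ofReal (le_of_lt hω)
      · rw [Set.indicator_of_notMem hω, Set.indicator_of_notMem hω]
        simp
    have h1N : (1 : ℝ≥0∞) ≤ ENNReal.ofReal N := by
      rw [← ENNReal.ofReal_one]
      exact ENNReal.ofReal_le_ofReal hN1
    calc P {ω | N < |X ω|} = 1 * P {ω | N < |X ω|} := (one_mul _).symm
      _ ≤ ENNReal.ofReal N * P {ω | N < |X ω|} := mul_le_mul_left h1N _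
      _ ≤ ∫⁻ ω, ENNReal.ofReal
          (Set.indicator {ω' | N < |X ω'|} (fun ω' => |X ω'|) ω) ∂P := key
      _ ≤ subExpNN Ps (fun ω =>
          Set.indicator {ω' | N < |X ω'|} (fun ω' => |X ω'|) ω) :=
        le_iSup₂ (f := fun (P : Measure Ω) (_ : P ∈ Ps) => ∫⁻ ω, ENNReal.ofReal
          (Set.indicator {ω' | N < |X ω'|} (fun ω' => |X ω'|) ω) ∂P) P hP
      _ ≤ κ := hNtail.le
  -- uniform continuity on a compact interval
  have hucK : UniformContinuousOn f (Set.Icc (-(N+1)) (N+1)) :=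
    (isCompact_Icc).uniformContinuousOn_of_continuous hf.continuousOn
  rw [Metric.uniformContinuousOn_iff] at hucK
  obtain ⟨δ₀, hδ₀, hδ⟩ := hucK (ε/4) (by positivity)
  set δ : ℝ := min δ₀ 1 with hδdef
  have hδpos : 0 < δ := lt_min hδ₀ one_pos
  -- eventually small capacity of the deviation set
  have hev : ∀ᶠ n in atTop, upperCap Ps {ω | δ ≤ |Xn n ω - X ω|} < κ :=
    (hconv δ hδpos).eventually_lt_const hκpos
  filter_upwards [hev] with n hn
  rw [Real.dist_eq]
  -- the main bound, uniform over P
  have h1 : ε / (4 * (M + 1)) * (2 * M) ≤ ε / 2 := by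
    rw [div_mul_eq_mul_div, div_le_div_iff₀ (by positivity) (by norm_num)]
    nlinarith
  have hclt : 3 * ε / 4 < ε := by linarith
  have hc0 : (0:ℝ) ≤ 3 * ε / 4 := by linarith
  have keyP : ∀ P : Measure Ω,
      |(⨆ _ : P ∈ Ps, ∫ ω, f (Xn n ω) ∂P) - ⨆ _ : P ∈ Ps, ∫ ω, f (X ω) ∂P| ≤ 3 * ε / 4 := by
    intro P
    by_cases hP : P ∈ Ps
    · rw [ciSup_pos hP, ciSup_pos hP]
      haveI := hprob P hP
      have hint1 : Integrable (fun ω => f (Xn n ω)) P := by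
        refine Integrable.mono' (integrable_const M)
          ((hf.measurable.comp (hXn n)).aestronglyMeasurable) ?_
        exact Filter.Eventually.of_forall fun ω => by
          simpa [Real.norm_eq_abs] using hM (Xn n ω)
      have hint2 : Integrable (fun ω => f (X ω)) P := by
        refine Integrable.mono' (integrable_const M)
          ((hf.measurable.comp hX).aestronglyMeasurable) ?_
        exact Filter.Eventually.of_forall fun ω => by
          simpa [Real.norm_eq_abs] using hM (X ω)
      set A : Set Ω := {ω | δ ≤ |Xn n ω - X ω|} ∪ {ω | N < |X ω|} with hAdef
      have hA1meas : MeasurableSet {ω | δ ≤ |Xn n ω - X ω|} :=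
        measurableSet_le measurable_const ((hXn n).sub hX).abs
      have hAmeas : MeasurableSet A := hA1meas.union hA2meas
      have hPA : P A ≤ κ + κ :=
        le_trans (measure_union_le _ _)
          (add_le_add
            (le_trans (le_iSup₂ (f := fun (Q : Measure Ω) (_ : Q ∈ Ps) =>
              Q {ω | δ ≤ |Xn n ω - X ω|}) P hP) hn.le)
            (htail P hP))
      have hPA' : (P A).toReal ≤ ε / (4 * (M + 1)) := by
        have hsum : (κ + κ).toReal = ε / (4 * (M + 1)) := by
          rw [ENNReal.toReal_add ENNReal.ofReal_ne_top ENNReal.ofReal_ne_top,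
            ENNReal.toReal_ofReal (by positivity)]
          field_simp
          ring
        exact hsum ▸ ENNReal.toReal_mono (by finiteness) hPA
      set g : Ω → ℝ := fun ω => ε/4 + A.indicator (fun _ => 2*M) ω with hgdef
      have hgint : Integrable g P :=
        (integrable_const (ε/4)).add ((integrable_const (2*M)).indicator hAmeas)
      have hpoint : ∀ ω, |f (Xn n ω) - f (X ω)| ≤ g ω := by
        intro ω
        by_cases hω : ω ∈ A
        · have h := abs_add_le (f (Xn n ω)) (-(f (X ω)))
          rw [← sub_eq_add_neg, abs_neg] at h
          have := hM (Xn n ω); have := hM (X ω)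
          simp only [hgdef, Set.indicator_of_mem hω]
          linarith
        · have hω1 : ¬ δ ≤ |Xn n ω - X ω| := fun h => hω (Or.inl h)
          have hω2 : ¬ N < |X ω| := fun h => hω (Or.inr h)
          push_neg at hω1 hω2
          have hXmem : X ω ∈ Set.Icc (-(N+1)) (N+1) := by
            rw [Set.mem_Icc]
            have h := abs_le.1 hω2
            constructor <;> linarith [h.1, h.2]
          have hXnmem : Xn n ω ∈ Set.Icc (-(N+1)) (N+1) := by
            have habs : |Xn n ω| ≤ |Xn n ω - X ω| + |X ω| := by
              have := abs_add_le (Xn n ω - X ω) (X ω)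
              simpa using this
            have hδ1 : δ ≤ 1 := min_le_right _ _
            have h2 : |Xn n ω| ≤ N + 1 := by linarith
            rw [Set.mem_Icc]
            have h := abs_le.1 h2
            constructor <;> linarith [h.1, h.2]
          have hd : dist (Xn n ω) (X ω) < δ₀ := by
            rw [Real.dist_eq]
            exact lt_of_lt_of_le hω1 (min_le_left _ _)
          have := hδ (Xn n ω) hXnmem (X ω) hXmem hd
          rw [Real.dist_eq] at this
          simp only [hgdef, Set.indicator_of_notMem hω]
          linarith
      calc |∫ ω, f (Xn n ω) ∂P - ∫ ω, f (X ω) ∂P|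
          = |∫ ω, (f (Xn n ω) - f (X ω)) ∂P| := by
            rw [integral_sub hint1 hint2]
        _ ≤ ∫ ω, |f (Xn n ω) - f (X ω)| ∂P := by
            simpa [Real.norm_eq_abs] using
              norm_integral_le_integral_norm (fun ω => f (Xn n ω) - f (X ω)) (μ := P)
        _ ≤ ∫ ω, g ω ∂P :=
            integral_mono (hint1.sub hint2).abs hgint hpoint
        _ = ε/4 + (P A).toReal * (2*M) := by
            rw [hgdef, integral_add (integrable_const (ε/4))
              ((integrable_const (2*M)).indicator hAmeas),
              integral_const, integral_indicator_const _ hAmeas]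
            simp [smul_eq_mul, Measure.real]
        _ ≤ ε/4 + ε / (4 * (M + 1)) * (2 * M) := by
            have := mul_le_mul_of_nonneg_right hPA' (by positivity : (0:ℝ) ≤ 2*M)
            linarith
        _ ≤ 3 * ε / 4 := by linarith
    · haveI : IsEmpty (P ∈ Ps) := ⟨hP⟩
      rw [Real.iSup_of_isEmpty, Real.iSup_of_isEmpty]
      simpa using hc0
  -- bounded above
  have hbdd : ∀ (g : Ω → ℝ), (∀ ω, |g ω| ≤ M) →
      BddAbove (Set.range fun P : Measure Ω => ⨆ _ : P ∈ Ps, ∫ ω, g ω ∂P) := by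
    intro g hg
    refine ⟨M, ?_⟩
    rintro _ ⟨P, rfl⟩
    show (⨆ _ : P ∈ Ps, ∫ ω, g ω ∂P) ≤ M
    by_cases hP : P ∈ Ps
    · rw [ciSup_pos hP]
      haveI := hprob P hP
      have := norm_integral_le_of_norm_le_const (μ := P) (f := fun ω => g ω) (C := M)
        (Filter.Eventually.of_forall fun ω => by simpa [Real.norm_eq_abs] using hg ω)
      rw [Real.norm_eq_abs] at this
      simp only [Measure.real, measure_univ, ENNReal.toReal_one, mul_one] at this
      exact (le_abs_self _).trans this
    · haveI : IsEmpty (P ∈ Ps) := ⟨hP⟩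
      rw [Real.iSup_of_isEmpty]
      exact hM0
  have := abs_ciSup_sub_ciSup_le
    (hbdd (fun ω => f (Xn n ω)) (fun ω => hM _))
    (hbdd (fun ω => f (X ω)) (fun ω => hM _)) keyP
  calc |subExp Ps (fun ω => f (Xn n ω)) - subExp Ps (fun ω => f (X ω))| ≤ 3 * ε / 4 := this
    _ < ε := hclt
end

section
/- Portmanteau, lower semicontinuous direction: if $\hat{E}[f(X_n)] \to \hat{E}[f(X)]$ for every bounded continuous $f : \mathbb{R} \to \mathbb{R}$, and $\hat{E}$ is continuous under monotone increasing limits of functions bounded below, then for every bounded lower semicontinuous $f : \mathbb{R} \to \mathbb{R}$, $\liminf_{n} \hat{E}[f(X_n)] \ge \hat{E}[f(X)]$. -/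
open MeasureTheory Filter Set Topology ENNReal

noncomputable def myApprox (f : ℝ → ℝ) (m : ℕ) (x : ℝ) : ℝ :=
  ⨅ y, (f y + (m + 1 : ℝ) * |x - y|)

section moreau

variable {f : ℝ → ℝ} {M : ℝ}

lemma my_bddBelow (hM : ∀ x, |f x| ≤ M) (m : ℕ) (x : ℝ) :
    BddBelow (Set.range fun y => f y + (m + 1 : ℝ) * |x - y|) := by
  refine ⟨-M, ?_⟩
  rintro _ ⟨y, rfl⟩
  simp only
  have h1 := (abs_le.1 (hM y)).1
  have h2 : (0:ℝ) ≤ (m + 1 : ℝ) * |x - y| :=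
    mul_nonneg (by positivity) (abs_nonneg _)
  linarith

lemma my_le (hM : ∀ x, |f x| ≤ M) (m : ℕ) (x : ℝ) : myApprox f m x ≤ f x := by
  have := ciInf_le (my_bddBelow hM m x) x
  simpa [myApprox] using this

lemma neg_le_my (hM : ∀ x, |f x| ≤ M) (m : ℕ) (x : ℝ) : -M ≤ myApprox f m x := by
  refine le_ciInf fun y => ?_
  have h1 := (abs_le.1 (hM y)).1
  have h2 : (0:ℝ) ≤ (m + 1 : ℝ) * |x - y| :=
    mul_nonneg (by positivity) (abs_nonneg _)
  linarith

lemma my_mono (hM : ∀ x, |f x| ≤ M) (x : ℝ) : Monotone fun m => myApprox f m x := by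
  intro m m' hmm
  refine ciInf_mono (my_bddBelow hM m x) fun y => ?_
  have hc : ((m:ℝ)+1) ≤ ((m':ℝ)+1) := by
    have : (m:ℝ) ≤ (m':ℝ) := Nat.cast_le.2 hmm
    linarith
  have : ((m:ℝ)+1) * |x - y| ≤ ((m':ℝ)+1) * |x - y| :=
    mul_le_mul_of_nonneg_right hc (abs_nonneg _)
  linarith

lemma my_le_add (hM : ∀ x, |f x| ≤ M) (m : ℕ) (x x' : ℝ) :
    myApprox f m x ≤ myApprox f m x' + (m + 1 : ℝ) * |x - x'| := by
  have : myApprox f m x - (m + 1 : ℝ) * |x - x'| ≤ myApprox f m x' := by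
    refine le_ciInf fun y => ?_
    have h1 : myApprox f m x ≤ f y + (m + 1 : ℝ) * |x - y| :=
      ciInf_le (my_bddBelow hM m x) y
    have h2 : |x - y| ≤ |x - x'| + |x' - y| := abs_sub_le _ _ _
    nlinarith [abs_nonneg (x - x'), abs_nonneg (x' - y)]
  linarith

lemma my_continuous (hM : ∀ x, |f x| ≤ M) (m : ℕ) : Continuous (myApprox f m) := by
  have : LipschitzWith (⟨(m+1:ℝ), by positivity⟩ : NNReal) (myApprox f m) := by
    refine LipschitzWith.of_dist_le_mul fun x x' => ?_
    have h1 := my_le_add hM m x x'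
    have h2 := my_le_add hM m x' x
    rw [Real.dist_eq, Real.dist_eq, abs_sub_le_iff]
    constructor
    · push_cast at h1 ⊢; show _ ≤ ((m:ℝ)+1) * |x - x'|; linarith
    · rw [abs_sub_comm x' x] at h2; push_cast at h2 ⊢; show _ ≤ ((m:ℝ)+1) * |x - x'|; linarith
  exact this.continuous

lemma my_tendsto (hf : LowerSemicontinuous f) (hM : ∀ x, |f x| ≤ M) (x : ℝ) :
    Tendsto (fun m => myApprox f m x) atTop (𝓝 (f x)) := by
  rw [tendsto_order]
  constructor
  · intro t ht
    obtain ⟨t', ht1, ht2⟩ := exists_between ht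
    have := hf x t' ht2
    rw [Metric.eventually_nhds_iff] at this
    obtain ⟨δ, hδ, hball⟩ := this
    obtain ⟨m0, hm0⟩ := exists_nat_gt ((t' + M) / δ)
    filter_upwards [eventually_ge_atTop m0] with m hm
    have hlb : t' ≤ myApprox f m x := by
      refine le_ciInf fun y => ?_
      by_cases hy : |x - y| < δ
      · have := hball (show dist y x < δ by rw [Real.dist_eq, abs_sub_comm]; exact hy)
        have h2 : (0:ℝ) ≤ (m + 1 : ℝ) * |x - y| :=
          mul_nonneg (by positivity) (abs_nonneg _)
        linarith
      · push_neg at hy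
        have h1 := (abs_le.1 (hM y)).1
        have hmR : ((m:ℝ)) ≥ (t' + M) / δ := le_trans hm0.le (Nat.cast_le.2 hm)
        have : (t' + M) ≤ (m:ℝ) * δ := by
          rw [ge_iff_le, div_le_iff₀ hδ] at hmR; linarith
        have h3 : (m:ℝ) * δ ≤ (m + 1 : ℝ) * |x - y| := by
          have : (m:ℝ) * δ ≤ (m + 1 : ℝ) * δ := by nlinarith
          nlinarith [hδ.le]
        linarith
    exact lt_of_lt_of_le ht1 hlb
  · intro t ht
    filter_upwards with m
    exact lt_of_le_of_lt (my_le hM m x) ht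

end moreau

section subexp

variable {Ω : Type*} [MeasurableSpace Ω] {Ps : Set (Measure Ω)} {M : ℝ}

lemma integrable_of_bdd {P : Measure Ω} [IsProbabilityMeasure P] {Z : Ω → ℝ}
    (hZ : Measurable Z) (hb : ∀ ω, |Z ω| ≤ M) : Integrable Z P := by
  refine (integrable_const M).mono' hZ.aestronglyMeasurable ?_
  exact ae_of_all _ fun ω => by simpa using hb ω

lemma abs_integral_le_of_bdd {P : Measure Ω} [IsProbabilityMeasure P] {Z : Ω → ℝ}
    (hZ : Measurable Z) (hb : ∀ ω, |Z ω| ≤ M) : |∫ ω, Z ω ∂P| ≤ M := by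
  have := norm_integral_le_of_norm_le_const (μ := P) (f := Z) (C := M)
    (ae_of_all _ fun ω => by simpa using hb ω)
  simpa using this

lemma subExp_bddAbove (hprob : ∀ P ∈ Ps, IsProbabilityMeasure P) {Z : Ω → ℝ}
    (hZ : Measurable Z) (hb : ∀ ω, |Z ω| ≤ M) :
    BddAbove (Set.range fun P => ⨆ _ : P ∈ Ps, ∫ ω, Z ω ∂P) := by
  refine ⟨max M 0, ?_⟩
  rintro _ ⟨P, rfl⟩
  simp only
  by_cases hP : P ∈ Ps
  · haveI := hprob P hP
    simp only [hP, ciSup_pos]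
    exact le_max_of_le_left (abs_le.1 (abs_integral_le_of_bdd hZ hb)).2
  · simp [hP, Real.iSup_of_isEmpty]

lemma subExp_le_max (hprob : ∀ P ∈ Ps, IsProbabilityMeasure P) {Z : Ω → ℝ}
    (hZ : Measurable Z) (hb : ∀ ω, |Z ω| ≤ M) : subExp Ps Z ≤ max M 0 := by
  refine ciSup_le fun P => ?_
  by_cases hP : P ∈ Ps
  · haveI := hprob P hP
    simp only [hP, ciSup_pos]
    exact le_max_of_le_left (abs_le.1 (abs_integral_le_of_bdd hZ hb)).2
  · simp [hP, Real.iSup_of_isEmpty]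

lemma integral_le_subExp (hprob : ∀ P ∈ Ps, IsProbabilityMeasure P) {Z : Ω → ℝ}
    (hZ : Measurable Z) (hb : ∀ ω, |Z ω| ≤ M) {P : Measure Ω} (hP : P ∈ Ps) :
    ∫ ω, Z ω ∂P ≤ subExp Ps Z := by
  have h := le_ciSup (subExp_bddAbove hprob hZ hb) P
  simpa [subExp, hP, ciSup_pos] using h

lemma neg_le_subExp (hne : Ps.Nonempty) (hprob : ∀ P ∈ Ps, IsProbabilityMeasure P)
    {Z : Ω → ℝ} (hZ : Measurable Z) (hb : ∀ ω, |Z ω| ≤ M) : -M ≤ subExp Ps Z := by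
  obtain ⟨P0, hP0⟩ := hne
  haveI := hprob P0 hP0
  exact le_trans (abs_le.1 (abs_integral_le_of_bdd hZ hb)).1
    (integral_le_subExp hprob hZ hb hP0)

lemma subExp_mono (hprob : ∀ P ∈ Ps, IsProbabilityMeasure P) {Z W : Ω → ℝ} {MW : ℝ}
    (hZ : Measurable Z) (hW : Measurable W) (hbZ : ∀ ω, |Z ω| ≤ M)
    (hbW : ∀ ω, |W ω| ≤ MW) (h : ∀ ω, Z ω ≤ W ω) : subExp Ps Z ≤ subExp Ps W := by
  refine ciSup_mono (subExp_bddAbove hprob hW hbW) fun P => ?_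
  by_cases hP : P ∈ Ps
  · haveI := hprob P hP
    simp only [hP, ciSup_pos]
    exact integral_mono (integrable_of_bdd hZ hbZ) (integrable_of_bdd hW hbW) h
  · simp [hP]

end subexp

theorem portmanteau_lsc {Ω : Type*} [MeasurableSpace Ω]
    (Ps : Set (Measure Ω)) (hne : Ps.Nonempty)
    (hprob : ∀ P ∈ Ps, IsProbabilityMeasure P)
    (X : Ω → ℝ) (Xn : ℕ → Ω → ℝ) (hX : Measurable X) (hXn : ∀ n, Measurable (Xn n))
    -- monotone continuity of the sublinear expectation under increasing limits
    -- of functions bounded below: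
    (hmc : ∀ (g : ℕ → Ω → ℝ) (G : Ω → ℝ) (c : ℝ),
      (∀ m, Measurable (g m)) → Measurable G → (∀ m ω, c ≤ g m ω) →
      (∀ ω, Monotone fun m => g m ω) →
      (∀ ω, Tendsto (fun m => g m ω) atTop (𝓝 (G ω))) →
      Tendsto (fun m => subExp Ps (g m)) atTop (𝓝 (subExp Ps G)))
    -- convergence in distribution:
    (hd : ∀ f : ℝ → ℝ, Continuous f → (∃ M, ∀ x, |f x| ≤ M) →
      Tendsto (fun n => subExp Ps (fun ω => f (Xn n ω))) atTop
        (𝓝 (subExp Ps (fun ω => f (X ω))))) :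
    ∀ f : ℝ → ℝ, LowerSemicontinuous f → (∃ M, ∀ x, |f x| ≤ M) →
      subExp Ps (fun ω => f (X ω)) ≤
        Filter.liminf (fun n => subExp Ps (fun ω => f (Xn n ω))) atTop := by
  intro f hf hbd
  obtain ⟨M, hM⟩ := hbd
  have hM0 : 0 ≤ M := le_trans (abs_nonneg _) (hM 0)
  have hfm : Measurable f := hf.measurable
  have hgb : ∀ m x, |myApprox f m x| ≤ M := fun m x =>
    abs_le.2 ⟨neg_le_my hM m x, le_trans (my_le hM m x) (abs_le.1 (hM x)).2⟩
  have hgc : ∀ m, Continuous (myApprox f m) := my_continuous hM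
  have hgm : ∀ m, Measurable (myApprox f m) := fun m => (hgc m).measurable
  have key : ∀ m : ℕ, subExp Ps (fun ω => myApprox f m (X ω)) ≤
      liminf (fun n => subExp Ps (fun ω => f (Xn n ω))) atTop := by
    intro m
    have hT := hd (myApprox f m) (hgc m) ⟨M, hgb m⟩
    have hle : ∀ n, subExp Ps (fun ω => myApprox f m (Xn n ω)) ≤
        subExp Ps (fun ω => f (Xn n ω)) := fun n =>
      subExp_mono hprob ((hgm m).comp (hXn n)) (hfm.comp (hXn n))
        (fun ω => hgb m _) (fun ω => hM _) (fun ω => my_le hM m _)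
    calc subExp Ps (fun ω => myApprox f m (X ω))
        = liminf (fun n => subExp Ps (fun ω => myApprox f m (Xn n ω))) atTop :=
          hT.liminf_eq.symm
      _ ≤ liminf (fun n => subExp Ps (fun ω => f (Xn n ω))) atTop := by
          refine liminf_le_liminf (Eventually.of_forall hle) ?_ ?_
          · exact isBoundedUnder_of ⟨-M, fun n =>
              neg_le_subExp hne hprob ((hgm m).comp (hXn n)) (fun ω => hgb m _)⟩
          · exact IsBoundedUnder.isCoboundedUnder_ge (isBoundedUnder_of
              ⟨max M 0, fun n =>
                subExp_le_max hprob (hfm.comp (hXn n)) (fun ω => hM _)⟩)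
  have hmc' := hmc (fun m ω => myApprox f m (X ω)) (fun ω => f (X ω)) (-M)
    (fun m => (hgm m).comp hX) (hfm.comp hX)
    (fun m ω => neg_le_my hM m _) (fun ω => my_mono hM (X ω))
    (fun ω => my_tendsto hf hM (X ω))
  exact le_of_tendsto' hmc' key
end
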